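/- arXiv:1303.4842 — 2 statements merged into one kernel-verified Lean document; each statement's English description precedes it below -/
import Mathlib

section
/- Any two maximal abelian subalgebras h₁, h₂ of u(n) (the real Lie algebra of skew-adjoint n×n complex matrices) are conjugate under the unitary group: there exists V ∈ U(n) such that V h₁ V* = h₂. -/
open Matrix

set_option maxHeartbeats 1000000

/-- Simultaneous unitary diagonalization of a commuting real subspace of
skew-adjoint matrices. -/
lemma exists_unitary_diag_aux (n : ℕ) (h : Submodule ℝ (Matrix (Fin n) (Fin n) ℂ))
    (hskew : ∀ X ∈ h, Xᴴ = -X)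
    (hab : ∀ X ∈ h, ∀ Y ∈ h, X * Y = Y * X) :
    ∃ U : Matrix (Fin n) (Fin n) ℂ, Uᴴ * U = 1 ∧
      ∀ X ∈ h, ∃ d : Fin n → ℂ, Uᴴ * X * U = Matrix.diagonal d := by
  classical
  set T : ↥h → (EuclideanSpace ℂ (Fin n) →ₗ[ℂ] EuclideanSpace ℂ (Fin n)) :=
    fun x => Matrix.toEuclideanLin (Complex.I • (x : Matrix (Fin n) (Fin n) ℂ)) with hT_def
  have hHerm : ∀ x : ↥h, (Complex.I • (x : Matrix (Fin n) (Fin n) ℂ)).IsHermitian := by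
    intro x
    show _ᴴ = _
    rw [Matrix.conjTranspose_smul, hskew _ x.2]
    simp [Complex.conj_I]
  have hSym : ∀ x, (T x).IsSymmetric := fun x =>
    Matrix.isHermitian_iff_isSymmetric.mp (hHerm x)
  have hComm : Pairwise (Function.onFun Commute T) := by
    intro x y _
    have hc : (Complex.I • (x : Matrix (Fin n) (Fin n) ℂ)) *
        (Complex.I • (y : Matrix (Fin n) (Fin n) ℂ)) =
        (Complex.I • (y : Matrix (Fin n) (Fin n) ℂ)) *
        (Complex.I • (x : Matrix (Fin n) (Fin n) ℂ)) := by
      rw [Matrix.smul_mul, Matrix.mul_smul, hab _ x.2 _ y.2, ← Matrix.mul_smul, ← Matrix.smul_mul]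
    show T x * T y = T y * T x
    refine LinearMap.ext fun v => ?_
    simp only [Module.End.mul_apply, hT_def, Matrix.toEuclideanLin_apply,
      Equiv.apply_symm_apply, Matrix.mulVec_mulVec, hc]
  set W : (↥h → ℂ) → Submodule ℂ (EuclideanSpace ℂ (Fin n)) :=
    fun χ => ⨅ x, Module.End.eigenspace (T x) (χ x) with hW_def
  have hTop : (⨆ χ : ↥h → ℂ, W χ) = ⊤ :=
    LinearMap.IsSymmetric.iSup_iInf_eq_top_of_commute hSym hComm
  have hOrth := LinearMap.IsSymmetric.orthogonalFamily_iInf_eigenspaces hSym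
  have hOrth := LinearMap.IsSymmetric.orthogonalFamily_iInf_eigenspaces hSym
  haveI : Fintype {χ : ↥h → ℂ // W χ ≠ ⊥} :=
    hOrth.independent.fintypeNeBotOfFiniteDimensional
  have hOrth' := hOrth.comp
    (Subtype.val_injective : Function.Injective ((↑) : {χ : ↥h → ℂ // W χ ≠ ⊥} → (↥h → ℂ)))
  have hTop' : (⨆ χ : {χ : ↥h → ℂ // W χ ≠ ⊥}, W χ.1) = ⊤ := by
    apply top_unique
    rw [← hTop]
    refine iSup_le fun χ => ?_
    by_cases hb : W χ = ⊥
    · rw [hb]; exact bot_le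
    · exact le_iSup_of_le ⟨χ, hb⟩ le_rfl
  have hInt := hOrth'.isInternal_iff.mpr (by rw [show (⨆ χ : {χ : ↥h → ℂ // W χ ≠ ⊥}, W χ.1) = ⊤ from hTop', Submodule.top_orthogonal_eq_bot])
  have hn : Module.finrank ℂ (EuclideanSpace ℂ (Fin n)) = n := finrank_euclideanSpace_fin
  set b := hInt.subordinateOrthonormalBasis hn hOrth' with hb_def
  set χj : Fin n → (↥h → ℂ) :=
    fun j => (hInt.subordinateOrthonormalBasisIndex hn j hOrth').1 with hχj_def
  have hbmem : ∀ (j : Fin n) (x : ↥h), T x (b j) = (χj j x) • b j := by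
    intro j x
    have hmem := hInt.subordinateOrthonormalBasis_subordinate hn j hOrth'
    have := (Submodule.mem_iInf _).mp hmem x
    exact Module.End.mem_eigenspace_iff.mp this
  set U : Matrix (Fin n) (Fin n) ℂ := Matrix.of fun i j => (b j : EuclideanSpace ℂ (Fin n)) i
    with hU_def
  have hsum : ∀ j k : Fin n,
      (∑ i, (starRingEnd ℂ) ((b j : EuclideanSpace ℂ (Fin n)) i) *
        (b k : EuclideanSpace ℂ (Fin n)) i) = if j = k then 1 else 0 := by
    intro j k
    have := orthonormal_iff_ite.mp b.orthonormal j k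
    simpa [PiLp.inner_apply, RCLike.inner_apply, mul_comm] using this
  have hU1 : Uᴴ * U = 1 := by
    ext j k
    simp only [Matrix.mul_apply, Matrix.conjTranspose_apply, hU_def, Matrix.of_apply,
      Matrix.one_apply, Complex.star_def]
    exact hsum j k
  refine ⟨U, hU1, ?_⟩
  intro X hX
  set μ : Fin n → ℂ := fun k => (-Complex.I) * (χj k ⟨X, hX⟩) with hμ_def
  have hXb : ∀ k : Fin n, X *ᵥ (WithLp.equiv 2 (Fin n → ℂ) (b k)) =
      μ k • (WithLp.equiv 2 (Fin n → ℂ) (b k)) := by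
    intro k
    set w := WithLp.equiv 2 (Fin n → ℂ) (b k) with hw
    have h1 : T ⟨X, hX⟩ (b k) = (χj k ⟨X, hX⟩) • b k := hbmem k ⟨X, hX⟩
    have h2 := congrArg (WithLp.equiv 2 (Fin n → ℂ)) h1
    rw [hT_def] at h2
    change (Complex.I • X) *ᵥ w = (χj k ⟨X, hX⟩) • w at h2
    have h3 : Complex.I • (X *ᵥ w) = (χj k ⟨X, hX⟩) • w := by
      rw [← Matrix.smul_mulVec]
      exact h2
    calc X *ᵥ w = (-Complex.I) • (Complex.I • (X *ᵥ w)) := by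
          rw [smul_smul]
          norm_num [Complex.I_mul_I]
      _ = (-Complex.I) • ((χj k ⟨X, hX⟩) • w) := by rw [h3]
      _ = μ k • w := by rw [smul_smul, hμ_def]
  refine ⟨μ, ?_⟩
  ext j k
  rw [Matrix.mul_assoc, Matrix.mul_apply]
  have hXU : ∀ i, (X * U) i k = μ k * (b k : EuclideanSpace ℂ (Fin n)) i := by
    intro i
    have := congrFun (hXb k) i
    simpa [Matrix.mul_apply, Matrix.mulVec, dotProduct, hU_def,
      Pi.smul_apply, smul_eq_mul] using this
  calc (∑ i, Uᴴ j i * (X * U) i k)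
      = ∑ i, μ k * ((starRingEnd ℂ) ((b j : EuclideanSpace ℂ (Fin n)) i) *
          (b k : EuclideanSpace ℂ (Fin n)) i) := by
        refine Finset.sum_congr rfl fun i _ => ?_
        rw [hXU i, Matrix.conjTranspose_apply]
        simp only [hU_def, Matrix.of_apply, Complex.star_def]
        ring
    _ = μ k * (if j = k then 1 else 0) := by rw [← Finset.mul_sum, hsum j k]
    _ = Matrix.diagonal μ j k := by
        by_cases hjk : j = k
        · subst hjk; simp
        · simp [Matrix.diagonal_apply_ne _ hjk, hjk]

/-- A maximal abelian subalgebra of `u(n)` is conjugate to the diagonal one. -/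
lemma key_aux (n : ℕ) (h : Submodule ℝ (Matrix (Fin n) (Fin n) ℂ))
    (hskew : ∀ X ∈ h, Xᴴ = -X)
    (hab : ∀ X ∈ h, ∀ Y ∈ h, X * Y = Y * X)
    (hmax : ∀ X : Matrix (Fin n) (Fin n) ℂ, Xᴴ = -X →
      (∀ Y ∈ h, X * Y = Y * X) → X ∈ h) :
    ∃ U : Matrix (Fin n) (Fin n) ℂ, Uᴴ * U = 1 ∧
      (fun X => Uᴴ * X * U) '' (h : Set (Matrix (Fin n) (Fin n) ℂ))
        = {Z : Matrix (Fin n) (Fin n) ℂ | Zᴴ = -Z ∧ ∀ i j, i ≠ j → Z i j = 0} := by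
  obtain ⟨U, hU, hdiag⟩ := exists_unitary_diag_aux n h hskew hab
  have hUU' : U * Uᴴ = 1 := mul_eq_one_comm.mp hU
  refine ⟨U, hU, ?_⟩
  ext Z
  constructor
  · rintro ⟨X, hX, rfl⟩
    constructor
    · simp only [Matrix.conjTranspose_mul, Matrix.conjTranspose_conjTranspose,
        hskew X hX, Matrix.mul_neg, Matrix.neg_mul, Matrix.mul_assoc]
    · intro i j hij
      obtain ⟨d, hd⟩ := hdiag X hX
      show (Uᴴ * X * U) i j = 0
      rw [hd]
      exact Matrix.diagonal_apply_ne d hij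
  · rintro ⟨hZ1, hZ2⟩
    have hZdiag : Z = Matrix.diagonal (fun i => Z i i) := by
      ext i j
      by_cases hij : i = j
      · subst hij; simp
      · rw [Matrix.diagonal_apply_ne _ hij]
        exact hZ2 i j hij
    set Y := U * Z * Uᴴ with hY
    have hYskew : Yᴴ = -Y := by
      simp only [hY, Matrix.conjTranspose_mul, Matrix.conjTranspose_conjTranspose, hZ1,
        Matrix.mul_neg, Matrix.neg_mul, Matrix.mul_assoc]
    have hYcomm : ∀ X' ∈ h, Y * X' = X' * Y := by
      intro X' hX'
      obtain ⟨d', hd'⟩ := hdiag X' hX'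
      have hX'eq : X' = U * Matrix.diagonal d' * Uᴴ := by
        rw [← hd']
        simp only [← Matrix.mul_assoc]
        rw [hUU', Matrix.one_mul, Matrix.mul_assoc, hUU', Matrix.mul_one]
      have hcd : Z * Matrix.diagonal d' = Matrix.diagonal d' * Z := by
        rw [hZdiag, Matrix.diagonal_mul_diagonal, Matrix.diagonal_mul_diagonal]
        simp [mul_comm]
      rw [hX'eq, hY]
      calc U * Z * Uᴴ * (U * Matrix.diagonal d' * Uᴴ)
          = U * (Z * (Uᴴ * U) * Matrix.diagonal d') * Uᴴ := by
            simp only [Matrix.mul_assoc]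
        _ = U * (Z * Matrix.diagonal d') * Uᴴ := by rw [hU, Matrix.mul_one]
        _ = U * (Matrix.diagonal d' * Z) * Uᴴ := by rw [hcd]
        _ = U * (Matrix.diagonal d' * (Uᴴ * U) * Z) * Uᴴ := by rw [hU, Matrix.mul_one]
        _ = U * Matrix.diagonal d' * Uᴴ * (U * Z * Uᴴ) := by simp only [Matrix.mul_assoc]
    have hYmem : Y ∈ h := hmax Y hYskew hYcomm
    refine ⟨Y, hYmem, ?_⟩
    show Uᴴ * (U * Z * Uᴴ) * U = Z
    simp only [← Matrix.mul_assoc]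
    rw [hU, Matrix.one_mul, Matrix.mul_assoc, hU, Matrix.mul_one]

/-- Any two maximal abelian subalgebras of `u(n)` (real subspaces of skew-adjoint matrices,
abelian, and maximal among such: every skew-adjoint matrix commuting with the subalgebra
already belongs to it) are conjugate under the unitary group `U(n)`. -/
theorem stmt_17 (n : ℕ) (h₁ h₂ : Submodule ℝ (Matrix (Fin n) (Fin n) ℂ))
    (hskew₁ : ∀ X ∈ h₁, Xᴴ = -X)
    (hab₁ : ∀ X ∈ h₁, ∀ Y ∈ h₁, X * Y = Y * X)
    (hmax₁ : ∀ X : Matrix (Fin n) (Fin n) ℂ, Xᴴ = -X →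
      (∀ Y ∈ h₁, X * Y = Y * X) → X ∈ h₁)
    (hskew₂ : ∀ X ∈ h₂, Xᴴ = -X)
    (hab₂ : ∀ X ∈ h₂, ∀ Y ∈ h₂, X * Y = Y * X)
    (hmax₂ : ∀ X : Matrix (Fin n) (Fin n) ℂ, Xᴴ = -X →
      (∀ Y ∈ h₂, X * Y = Y * X) → X ∈ h₂) :
    ∃ V : Matrix (Fin n) (Fin n) ℂ, Vᴴ * V = 1 ∧
      (fun X => V * X * Vᴴ) '' (h₁ : Set (Matrix (Fin n) (Fin n) ℂ))
        = (h₂ : Set (Matrix (Fin n) (Fin n) ℂ)) := by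
  obtain ⟨U₁, hU₁, him₁⟩ := key_aux n h₁ hskew₁ hab₁ hmax₁
  obtain ⟨U₂, hU₂, him₂⟩ := key_aux n h₂ hskew₂ hab₂ hmax₂
  have hU₁' : U₁ * U₁ᴴ = 1 := mul_eq_one_comm.mp hU₁
  have hU₂' : U₂ * U₂ᴴ = 1 := mul_eq_one_comm.mp hU₂
  refine ⟨U₂ * U₁ᴴ, ?_, ?_⟩
  · rw [Matrix.conjTranspose_mul, Matrix.conjTranspose_conjTranspose]
    calc U₁ * U₂ᴴ * (U₂ * U₁ᴴ) = U₁ * (U₂ᴴ * U₂) * U₁ᴴ := by simp only [Matrix.mul_assoc]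
      _ = 1 := by rw [hU₂, Matrix.mul_one, hU₁']
  · have hfun : ∀ a ∈ (h₁ : Set (Matrix (Fin n) (Fin n) ℂ)),
        (U₂ * U₁ᴴ) * a * (U₂ * U₁ᴴ)ᴴ
          = ((fun Y => U₂ * Y * U₂ᴴ) ∘ (fun X => U₁ᴴ * X * U₁)) a := by
      intro a _
      simp only [Function.comp_apply, Matrix.conjTranspose_mul,
        Matrix.conjTranspose_conjTranspose, Matrix.mul_assoc]
    rw [Set.image_congr hfun, Set.image_comp, him₁, ← him₂, ← Set.image_comp]
    have hid : ∀ a ∈ (h₂ : Set (Matrix (Fin n) (Fin n) ℂ)),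
        ((fun Y => U₂ * Y * U₂ᴴ) ∘ (fun X => U₂ᴴ * X * U₂)) a = a := by
      intro a _
      show U₂ * (U₂ᴴ * a * U₂) * U₂ᴴ = a
      simp only [← Matrix.mul_assoc]
      rw [hU₂', Matrix.one_mul, Matrix.mul_assoc, hU₂', Matrix.mul_one]
    rw [Set.image_congr hid, Set.image_id']
end

section
/- Let B be a real associative unital Banach algebra and G a closed subgroup of the group B^× of invertible elements. Then the set g = {x ∈ B : exp(tx) ∈ G for all t ∈ ℝ} is a closed real Lie subalgebra of B: it is closed in B, closed under addition and real scalar multiplication, and closed under the commutator bracket [x,y] = xy − yx. -/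
section Stmt19Aux
set_option maxHeartbeats 1000000
set_option linter.unusedSectionVars false

open Filter Topology NormedSpace

variable {B : Type*} [NormedRing B] [NormedAlgebra ℝ B] [CompleteSpace B]

noncomputable instance s19_ratNormedAlgebra : NormedAlgebra ℚ B :=
  NormedAlgebra.restrictScalars ℚ ℝ B



lemma s19_exp_sub_one_le (a : B) : ‖exp a - 1‖ ≤ ‖a‖ * Real.exp ‖a‖ := by
  have h := NormedSpace.exp_series_hasSum_exp' (𝕂 := ℝ) a
  have hs := h.summable
  have hsplit := Summable.sum_add_tsum_nat_add (f := fun n : ℕ => ((n.factorial : ℝ))⁻¹ • a ^ n) 1 hs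
  have h0 : ∑ i ∈ Finset.range 1, (((i : ℕ).factorial : ℝ))⁻¹ • a ^ i = 1 := by simp
  have heq : exp a - 1 = ∑' n : ℕ, (((n+1).factorial : ℝ))⁻¹ • a ^ (n+1) := by
    rw [exp_eq_tsum ℝ]
    beta_reduce
    rw [← hsplit, h0]; abel
  rw [heq]
  have hsum2 : Summable fun n : ℕ => ‖(((n+1).factorial : ℝ))⁻¹ • a ^ (n+1)‖ :=
    (summable_nat_add_iff 1).2 (norm_expSeries_summable' (𝕂 := ℝ) a)
  refine (norm_tsum_le_tsum_norm hsum2).trans ?_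
  have hsum3 : Summable fun n : ℕ => ‖a‖ * (‖a‖ ^ n / n.factorial) :=
    (Real.summable_pow_div_factorial ‖a‖).mul_left _
  have hle : ∀ n : ℕ, ‖(((n+1).factorial : ℝ))⁻¹ • a ^ (n+1)‖ ≤ ‖a‖ * (‖a‖ ^ n / n.factorial) := by
    intro n
    rw [norm_smul]
    have h1 : ‖a ^ (n+1)‖ ≤ ‖a‖ ^ (n+1) := norm_pow_le' a n.succ_pos
    have h2 : (((n+1).factorial : ℝ))⁻¹ ≤ ((n.factorial : ℝ))⁻¹ := by
      apply inv_anti₀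
      · positivity
      · exact_mod_cast Nat.factorial_le (Nat.le_succ n)
    have h3 : ‖(((n+1).factorial : ℝ))⁻¹‖ = (((n+1).factorial : ℝ))⁻¹ := by
      rw [Real.norm_eq_abs, abs_of_nonneg]; positivity
    calc ‖(((n+1).factorial : ℝ))⁻¹‖ * ‖a ^ (n+1)‖ ≤ ((n.factorial : ℝ))⁻¹ * ‖a‖ ^ (n+1) := by
          rw [h3]; exact mul_le_mul h2 h1 (norm_nonneg _) (by positivity)
      _ = ‖a‖ * (‖a‖ ^ n / n.factorial) := by rw [pow_succ]; ring
  refine (Summable.tsum_le_tsum hle hsum2 hsum3).trans ?_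
  rw [tsum_mul_left, Real.exp_eq_exp_ℝ, exp_eq_tsum_div]

lemma s19_exp_quadratic (a : B) : ‖exp a - 1 - a‖ ≤ ‖a‖ ^ 2 * Real.exp ‖a‖ := by
  have h := NormedSpace.exp_series_hasSum_exp' (𝕂 := ℝ) a
  have hs := h.summable
  have hsplit := Summable.sum_add_tsum_nat_add (f := fun n : ℕ => ((n.factorial : ℝ))⁻¹ • a ^ n) 2 hs
  have h0 : ∑ i ∈ Finset.range 2, (((i : ℕ).factorial : ℝ))⁻¹ • a ^ i = 1 + a := by
    simp [Finset.sum_range_succ]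
  have heq : exp a - 1 - a = ∑' n : ℕ, (((n+2).factorial : ℝ))⁻¹ • a ^ (n+2) := by
    rw [exp_eq_tsum ℝ]
    beta_reduce
    rw [← hsplit, h0]; abel
  rw [heq]
  have hsum2 : Summable fun n : ℕ => ‖(((n+2).factorial : ℝ))⁻¹ • a ^ (n+2)‖ :=
    (summable_nat_add_iff 2).2 (norm_expSeries_summable' (𝕂 := ℝ) a)
  refine (norm_tsum_le_tsum_norm hsum2).trans ?_
  have hsum3 : Summable fun n : ℕ => ‖a‖ ^ 2 * (‖a‖ ^ n / n.factorial) :=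
    (Real.summable_pow_div_factorial ‖a‖).mul_left _
  have hle : ∀ n : ℕ, ‖(((n+2).factorial : ℝ))⁻¹ • a ^ (n+2)‖ ≤ ‖a‖ ^ 2 * (‖a‖ ^ n / n.factorial) := by
    intro n
    rw [norm_smul]
    have h1 : ‖a ^ (n+2)‖ ≤ ‖a‖ ^ (n+2) := norm_pow_le' a (by omega)
    have h2 : (((n+2).factorial : ℝ))⁻¹ ≤ ((n.factorial : ℝ))⁻¹ := by
      apply inv_anti₀
      · positivity
      · exact_mod_cast Nat.factorial_le (by omega)
    have h3 : ‖(((n+2).factorial : ℝ))⁻¹‖ = (((n+2).factorial : ℝ))⁻¹ := by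
      rw [Real.norm_eq_abs, abs_of_nonneg]; positivity
    calc ‖(((n+2).factorial : ℝ))⁻¹‖ * ‖a ^ (n+2)‖ ≤ ((n.factorial : ℝ))⁻¹ * ‖a‖ ^ (n+2) := by
          rw [h3]; exact mul_le_mul h2 h1 (norm_nonneg _) (by positivity)
      _ = ‖a‖ ^ 2 * (‖a‖ ^ n / n.factorial) := by ring
  refine (Summable.tsum_le_tsum hle hsum2 hsum3).trans ?_
  rw [tsum_mul_left, Real.exp_eq_exp_ℝ, exp_eq_tsum_div]


lemma s19_mul_pow_bound {b : B} {m : ℝ} (hb : ‖b - 1‖ ≤ m) (w : B) :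
    ∀ n : ℕ, ‖w * b ^ n‖ ≤ (1 + m) ^ n * ‖w‖ := by
  have hm : 0 ≤ m := le_trans (norm_nonneg _) hb
  intro n
  induction n with
  | zero => simp
  | succ n ih =>
    have hid : w * b ^ (n+1) = w * b ^ n + (w * b ^ n) * (b - 1) := by noncomm_ring
    calc ‖w * b ^ (n+1)‖ ≤ ‖w * b ^ n‖ + ‖w * b ^ n‖ * ‖b - 1‖ := by
          rw [hid]; exact (norm_add_le _ _).trans (by gcongr; exact norm_mul_le _ _)
      _ ≤ ‖w * b ^ n‖ * (1 + m) := by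
          have := norm_nonneg (w * b ^ n); nlinarith
      _ ≤ ((1 + m) ^ n * ‖w‖) * (1 + m) := by
          have : (0:ℝ) ≤ 1 + m := by linarith
          nlinarith [norm_nonneg (w * b ^ n)]
      _ = (1 + m) ^ (n+1) * ‖w‖ := by ring

lemma s19_pow_sub_pow_bound {A b : B} {m : ℝ} (hA : ‖A - 1‖ ≤ m) (hb : ‖b - 1‖ ≤ m) :
    ∀ n : ℕ, ‖A ^ n - b ^ n‖ ≤ n * (1 + m) ^ n * ‖A - b‖ := by
  have hm : 0 ≤ m := le_trans (norm_nonneg _) hA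
  have h1m : (0:ℝ) ≤ 1 + m := by linarith
  intro n
  induction n with
  | zero => simp
  | succ n ih =>
    have hid : A ^ (n+1) - b ^ (n+1)
        = (A ^ n - b ^ n) + (A - 1) * (A ^ n - b ^ n) + (A - b) * b ^ n := by
      simp only [pow_succ']; noncomm_ring
    have h2 : ‖(A - 1) * (A ^ n - b ^ n)‖ ≤ m * (n * (1 + m) ^ n * ‖A - b‖) := by
      refine (norm_mul_le _ _).trans ?_
      exact mul_le_mul hA ih (norm_nonneg _) hm
    have h3 : ‖(A - b) * b ^ n‖ ≤ (1 + m) ^ n * ‖A - b‖ := s19_mul_pow_bound hb (A - b) n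
    calc ‖A ^ (n+1) - b ^ (n+1)‖
        ≤ ‖A ^ n - b ^ n‖ + ‖(A - 1) * (A ^ n - b ^ n)‖ + ‖(A - b) * b ^ n‖ := by
          rw [hid]; exact (norm_add_le _ _).trans (by gcongr; exact norm_add_le _ _)
      _ ≤ n * (1 + m) ^ n * ‖A - b‖ + m * (n * (1 + m) ^ n * ‖A - b‖)
            + (1 + m) ^ n * ‖A - b‖ := by gcongr
      _ ≤ (↑(n+1) : ℝ) * (1 + m) ^ (n+1) * ‖A - b‖ := by
          push_cast
          rw [pow_succ]
          nlinarith [mul_nonneg (mul_nonneg (pow_nonneg h1m n) (norm_nonneg (A - b))) hm,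
            Nat.cast_nonneg (α := ℝ) n]



lemma s19_trotter (u v : B) :
    Tendsto (fun n : ℕ => (exp ((n:ℝ)⁻¹ • u) * exp ((n:ℝ)⁻¹ • v)) ^ n) atTop
      (𝓝 (exp (u + v))) := by
  rw [tendsto_iff_norm_sub_tendsto_zero]
  set S0 := ‖u‖ + ‖v‖ with hS0def
  have hS0 : 0 ≤ S0 := by positivity
  have he3 : Real.exp 1 ≤ 3 := by
    have := Real.exp_one_lt_d9; linarith
  refine squeeze_zero' (Eventually.of_forall fun n => norm_nonneg _)
    ?_ (tendsto_const_div_atTop_nhds_zero_nat (25 * S0 ^ 2 * Real.exp (13 * S0)))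
  filter_upwards [eventually_ge_atTop (max 1 ⌈S0⌉₊)] with n hn
  have hn1 : 1 ≤ n := le_trans (le_max_left _ _) hn
  have hnR : (1:ℝ) ≤ (n:ℝ) := by exact_mod_cast hn1
  have hnpos : (0:ℝ) < (n:ℝ) := by linarith
  have hSn : S0 ≤ (n:ℝ) := by
    refine le_trans (Nat.le_ceil S0) ?_
    exact_mod_cast le_trans (le_max_right 1 ⌈S0⌉₊) hn
  set a := (n:ℝ)⁻¹ • u with hadef
  set b := (n:ℝ)⁻¹ • v with hbdef
  set s := S0 / n with hsdef
  have hs0 : 0 ≤ s := by positivity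
  have hs1 : s ≤ 1 := by rw [div_le_one hnpos]; exact hSn
  have ha : ‖a‖ = ‖u‖ / n := by
    rw [hadef, norm_smul, Real.norm_eq_abs, abs_inv, Nat.abs_cast, inv_mul_eq_div]
  have hb : ‖b‖ = ‖v‖ / n := by
    rw [hbdef, norm_smul, Real.norm_eq_abs, abs_inv, Nat.abs_cast, inv_mul_eq_div]
  have hab : ‖a‖ + ‖b‖ = s := by rw [ha, hb, hsdef, hS0def]; ring
  have hα0 : 0 ≤ ‖a‖ := norm_nonneg _
  have hβ0 : 0 ≤ ‖b‖ := norm_nonneg _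
  have hαs : ‖a‖ ≤ s := by linarith
  have hβs : ‖b‖ ≤ s := by linarith
  have hexp3 : ∀ r : ℝ, r ≤ s → Real.exp r ≤ 3 := fun r hr =>
    le_trans (Real.exp_le_exp.2 (le_trans hr hs1)) he3
  -- quadratic remainder bounds
  have hEa : ‖exp a - 1 - a‖ ≤ 3 * ‖a‖ ^ 2 := by
    refine (s19_exp_quadratic a).trans ?_
    have h3 := hexp3 ‖a‖ hαs
    have := mul_le_mul_of_nonneg_left h3 (sq_nonneg ‖a‖)
    linarith
  have hEb : ‖exp b - 1 - b‖ ≤ 3 * ‖b‖ ^ 2 := by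
    refine (s19_exp_quadratic b).trans ?_
    have h3 := hexp3 ‖b‖ hβs
    have := mul_le_mul_of_nonneg_left h3 (sq_nonneg ‖b‖)
    linarith
  have habs : ‖a + b‖ ≤ s := le_trans (norm_add_le _ _) (le_of_eq hab)
  have hEab : ‖exp (a + b) - 1 - (a + b)‖ ≤ 3 * s ^ 2 := by
    refine (s19_exp_quadratic (a + b)).trans ?_
    have h3 := hexp3 ‖a + b‖ habs
    have h4 := mul_le_mul_of_nonneg_left h3 (sq_nonneg ‖a + b‖)
    have h5 : ‖a + b‖ ^ 2 ≤ s ^ 2 := pow_le_pow_left₀ (norm_nonneg _) habs 2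
    nlinarith
  -- first order bounds
  have hFa : ‖exp a - 1‖ ≤ 3 * ‖a‖ := by
    refine (s19_exp_sub_one_le a).trans ?_
    have h3 := hexp3 ‖a‖ hαs
    have := mul_le_mul_of_nonneg_left h3 hα0
    linarith
  have hFb : ‖exp b - 1‖ ≤ 3 * ‖b‖ := by
    refine (s19_exp_sub_one_le b).trans ?_
    have h3 := hexp3 ‖b‖ hβs
    have := mul_le_mul_of_nonneg_left h3 hβ0
    linarith
  have hFab : ‖exp (a + b) - 1‖ ≤ 13 * s := by
    refine (s19_exp_sub_one_le (a + b)).trans ?_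
    have h3 := hexp3 ‖a + b‖ habs
    have := mul_le_mul habs h3 (Real.exp_pos _).le hs0
    linarith
  have hFA : ‖exp a * exp b - 1‖ ≤ 13 * s := by
    have hid2 : exp a * exp b - 1
        = (exp a - 1) * (exp b - 1) + (exp a - 1) + (exp b - 1) := by noncomm_ring
    rw [hid2]
    have h1 : ‖(exp a - 1) * (exp b - 1)‖ ≤ (3 * ‖a‖) * (3 * ‖b‖) :=
      (norm_mul_le _ _).trans (mul_le_mul hFa hFb (norm_nonneg _) (by linarith))
    refine le_trans (norm_add_le _ _) (le_trans (add_le_add (norm_add_le _ _) le_rfl) ?_)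
    have := add_le_add (add_le_add h1 hFa) hFb
    refine le_trans this ?_
    nlinarith
  -- main difference bound
  have hid : exp a * exp b - exp (a + b)
      = a * b + (exp b - 1 - b) + a * (exp b - 1 - b) + (exp a - 1 - a)
        + (exp a - 1 - a) * b + (exp a - 1 - a) * (exp b - 1 - b)
        - (exp (a + b) - 1 - (a + b)) := by noncomm_ring
  have hd : ‖exp a * exp b - exp (a + b)‖ ≤ 25 * s ^ 2 := by
    rw [hid]
    have b1 : ‖a * b‖ ≤ s ^ 2 := by
      refine (norm_mul_le _ _).trans ?_; nlinarith
    have b2 : ‖exp b - 1 - b‖ ≤ 3 * s ^ 2 := by nlinarith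
    have b3 : ‖a * (exp b - 1 - b)‖ ≤ 3 * s ^ 2 := by
      refine (norm_mul_le _ _).trans ?_
      have := mul_le_mul hαs hEb (norm_nonneg _) hs0
      nlinarith [sq_nonneg ‖b‖]
    have b4 : ‖exp a - 1 - a‖ ≤ 3 * s ^ 2 := by nlinarith
    have b5 : ‖(exp a - 1 - a) * b‖ ≤ 3 * s ^ 2 := by
      refine (norm_mul_le _ _).trans ?_
      have := mul_le_mul hEa hβs (norm_nonneg _) (by positivity : (0:ℝ) ≤ 3 * ‖a‖ ^ 2)
      nlinarith [sq_nonneg ‖a‖]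
    have b6 : ‖(exp a - 1 - a) * (exp b - 1 - b)‖ ≤ 9 * s ^ 2 := by
      refine (norm_mul_le _ _).trans ?_
      have h0 := mul_le_mul hEa hEb (norm_nonneg _) (by positivity : (0:ℝ) ≤ 3 * ‖a‖ ^ 2)
      have hα2 : ‖a‖ ^ 2 ≤ s ^ 2 := pow_le_pow_left₀ hα0 hαs 2
      have hβ2 : ‖b‖ ^ 2 ≤ s ^ 2 := pow_le_pow_left₀ hβ0 hβs 2
      have h1 : ‖a‖ ^ 2 * ‖b‖ ^ 2 ≤ s ^ 2 * s ^ 2 :=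
        mul_le_mul hα2 hβ2 (sq_nonneg _) (sq_nonneg _)
      have hs2 : s ^ 2 ≤ 1 := by nlinarith
      have h2 : s ^ 2 * s ^ 2 ≤ s ^ 2 := mul_le_of_le_one_left (sq_nonneg s) hs2
      nlinarith
    calc ‖a * b + (exp b - 1 - b) + a * (exp b - 1 - b) + (exp a - 1 - a)
          + (exp a - 1 - a) * b + (exp a - 1 - a) * (exp b - 1 - b)
          - (exp (a + b) - 1 - (a + b))‖
        ≤ ‖a * b + (exp b - 1 - b) + a * (exp b - 1 - b) + (exp a - 1 - a)
          + (exp a - 1 - a) * b + (exp a - 1 - a) * (exp b - 1 - b)‖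
          + ‖exp (a + b) - 1 - (a + b)‖ := norm_sub_le _ _
      _ ≤ (‖a * b + (exp b - 1 - b) + a * (exp b - 1 - b) + (exp a - 1 - a)
          + (exp a - 1 - a) * b‖ + ‖(exp a - 1 - a) * (exp b - 1 - b)‖)
          + ‖exp (a + b) - 1 - (a + b)‖ := by gcongr; exact norm_add_le _ _
      _ ≤ ((‖a * b + (exp b - 1 - b) + a * (exp b - 1 - b) + (exp a - 1 - a)‖
          + ‖(exp a - 1 - a) * b‖) + ‖(exp a - 1 - a) * (exp b - 1 - b)‖)
          + ‖exp (a + b) - 1 - (a + b)‖ := by gcongr; exact norm_add_le _ _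
      _ ≤ (((‖a * b + (exp b - 1 - b) + a * (exp b - 1 - b)‖ + ‖exp a - 1 - a‖
          + ‖(exp a - 1 - a) * b‖) + ‖(exp a - 1 - a) * (exp b - 1 - b)‖)
          + ‖exp (a + b) - 1 - (a + b)‖) := by gcongr; exact norm_add_le _ _
      _ ≤ ((((‖a * b + (exp b - 1 - b)‖ + ‖a * (exp b - 1 - b)‖) + ‖exp a - 1 - a‖
          + ‖(exp a - 1 - a) * b‖) + ‖(exp a - 1 - a) * (exp b - 1 - b)‖)
          + ‖exp (a + b) - 1 - (a + b)‖) := by gcongr; exact norm_add_le _ _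
      _ ≤ (((((‖a * b‖ + ‖exp b - 1 - b‖) + ‖a * (exp b - 1 - b)‖) + ‖exp a - 1 - a‖
          + ‖(exp a - 1 - a) * b‖) + ‖(exp a - 1 - a) * (exp b - 1 - b)‖)
          + ‖exp (a + b) - 1 - (a + b)‖) := by gcongr; exact norm_add_le _ _
      _ ≤ 25 * s ^ 2 := by linarith
  -- power identity
  have hExp : (exp (a + b)) ^ n = exp (u + v) := by
    have h1 : a + b = (n:ℝ)⁻¹ • (u + v) := by rw [hadef, hbdef, smul_add]
    rw [← exp_nsmul, h1, ← Nat.cast_smul_eq_nsmul ℝ, smul_smul,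
      mul_inv_cancel₀ (ne_of_gt hnpos), one_smul]
  have hpow := s19_pow_sub_pow_bound hFA hFab n
  have hgrow : ((1:ℝ) + 13 * s) ^ n ≤ Real.exp (13 * S0) := by
    calc ((1:ℝ) + 13 * s) ^ n ≤ (Real.exp (13 * s)) ^ n := by
          apply pow_le_pow_left₀ (by positivity)
          linarith [Real.add_one_le_exp (13 * s)]
      _ = Real.exp ((n:ℝ) * (13 * s)) := by rw [← Real.exp_nat_mul]
      _ = Real.exp (13 * S0) := by
          congr 1
          rw [hsdef]
          field_simp
  calc ‖(exp a * exp b) ^ n - exp (u + v)‖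
      = ‖(exp a * exp b) ^ n - (exp (a + b)) ^ n‖ := by rw [hExp]
    _ ≤ n * (1 + 13 * s) ^ n * ‖exp a * exp b - exp (a + b)‖ := hpow
    _ ≤ n * Real.exp (13 * S0) * (25 * s ^ 2) := by
        have h1 : (0:ℝ) ≤ (n:ℝ) := le_of_lt hnpos
        have h2 : (0:ℝ) ≤ (1 + 13 * s) ^ n := by positivity
        refine mul_le_mul (by gcongr) hd (norm_nonneg _) (by positivity)
    _ = 25 * S0 ^ 2 * Real.exp (13 * S0) / n := by
        rw [hsdef]
        field_simp



lemma s19_exp_mul_exp_neg (c : B) : exp c * exp (-c) = 1 := by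
  rw [← exp_add_of_commute ((Commute.refl c).neg_right)]
  simp

lemma s19_exp_neg_mul_exp (c : B) : exp (-c) * exp c = 1 := by
  rw [← exp_add_of_commute ((Commute.refl c).neg_left)]
  simp

lemma s19_inv_val {p : Bˣ} {c : B} (h : (p : B) = exp c) :
    ((p⁻¹ : Bˣ) : B) = exp (-c) := by
  calc ((p⁻¹ : Bˣ) : B) = ((p⁻¹ : Bˣ) : B) * ((p : B) * exp (-c)) := by
        rw [h, s19_exp_mul_exp_neg, mul_one]
    _ = (((p⁻¹ : Bˣ) : B) * (p : B)) * exp (-c) := by rw [mul_assoc]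
    _ = exp (-c) := by rw [Units.inv_mul, one_mul]

lemma s19_units_limit {G : Subgroup Bˣ} (hG : IsClosed (G : Set Bˣ)) {w : ℕ → Bˣ}
    (hwG : ∀ n, w n ∈ G) {a b : B} (hab : a * b = 1) (hba : b * a = 1)
    (hval : Tendsto (fun n => ((w n : Bˣ) : B)) atTop (𝓝 a))
    (hinv : Tendsto (fun n => (((w n)⁻¹ : Bˣ) : B)) atTop (𝓝 b)) :
    ∃ u ∈ G, (u : B) = a := by
  have hU : Tendsto w atTop (𝓝 (⟨a, b, hab, hba⟩ : Bˣ)) := by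
    rw [Units.isInducing_embedProduct.tendsto_nhds_iff]
    exact Tendsto.prodMk_nhds hval ((MulOpposite.continuous_op.tendsto _).comp hinv)
  exact ⟨⟨a, b, hab, hba⟩, hG.mem_of_tendsto hU (Eventually.of_forall hwG), rfl⟩
end Stmt19Aux

open Filter Topology NormedSpace
set_option maxHeartbeats 1000000 in
/-- If `B` is a real associative unital Banach algebra and `G` is a closed subgroup of the
group `B^×` of invertible elements, then `g = {x ∈ B : exp(tx) ∈ G for all t ∈ ℝ}` is a
closed real Lie subalgebra of `B`: it is closed in `B`, closed under addition and real scalar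
multiplication, and closed under the commutator bracket. -/


theorem stmt_19 {B : Type*} [NormedRing B] [NormedAlgebra ℝ B] [CompleteSpace B]
    (G : Subgroup Bˣ) (hG : IsClosed (G : Set Bˣ)) :
    IsClosed {x : B | ∀ t : ℝ, ∃ u ∈ G, (u : B) = NormedSpace.exp (t • x)} ∧
    (0 : B) ∈ {x : B | ∀ t : ℝ, ∃ u ∈ G, (u : B) = NormedSpace.exp (t • x)} ∧
    (∀ x y : B, x ∈ {x : B | ∀ t : ℝ, ∃ u ∈ G, (u : B) = NormedSpace.exp (t • x)} →
      y ∈ {x : B | ∀ t : ℝ, ∃ u ∈ G, (u : B) = NormedSpace.exp (t • x)} →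
      x + y ∈ {x : B | ∀ t : ℝ, ∃ u ∈ G, (u : B) = NormedSpace.exp (t • x)}) ∧
    (∀ (c : ℝ) (x : B), x ∈ {x : B | ∀ t : ℝ, ∃ u ∈ G, (u : B) = NormedSpace.exp (t • x)} →
      c • x ∈ {x : B | ∀ t : ℝ, ∃ u ∈ G, (u : B) = NormedSpace.exp (t • x)}) ∧
    (∀ x y : B, x ∈ {x : B | ∀ t : ℝ, ∃ u ∈ G, (u : B) = NormedSpace.exp (t • x)} →
      y ∈ {x : B | ∀ t : ℝ, ∃ u ∈ G, (u : B) = NormedSpace.exp (t • x)} →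
      x * y - y * x ∈ {x : B | ∀ t : ℝ, ∃ u ∈ G, (u : B) = NormedSpace.exp (t • x)}) := by
  set S := {x : B | ∀ t : ℝ, ∃ u ∈ G, (u : B) = NormedSpace.exp (t • x)} with hSdef
  -- scalar multiples
  have hsmulS : ∀ (c : ℝ) (x : B), x ∈ S → c • x ∈ S := by
    intro c x hx t
    rw [smul_smul]
    exact hx (t * c)
  -- zero
  have hzero : (0 : B) ∈ S := by
    intro t
    exact ⟨1, one_mem G, by simp⟩
  -- addition
  have haddS : ∀ x y : B, x ∈ S → y ∈ S → x + y ∈ S := by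
    intro x y hx hy t
    choose p hpG hp using fun n : ℕ => hx ((n:ℝ)⁻¹ * t)
    choose q hqG hq using fun n : ℕ => hy ((n:ℝ)⁻¹ * t)
    set u := t • x with hudef
    set v := t • y with hvdef
    have hp' : ∀ n : ℕ, ((p n : Bˣ) : B) = exp ((n:ℝ)⁻¹ • u) := fun n => by
      rw [hp n, hudef, smul_smul]
    have hq' : ∀ n : ℕ, ((q n : Bˣ) : B) = exp ((n:ℝ)⁻¹ • v) := fun n => by
      rw [hq n, hvdef, smul_smul]
    set w : ℕ → Bˣ := fun n => (p n * q n) ^ n with hwdef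
    have hwG : ∀ n, w n ∈ G := fun n => pow_mem (mul_mem (hpG n) (hqG n)) n
    have hval : Tendsto (fun n => ((w n : Bˣ) : B)) atTop (𝓝 (exp (u + v))) := by
      refine (s19_trotter u v).congr fun n => ?_
      rw [hwdef]
      push_cast
      rw [hp', hq']
    have hinv : Tendsto (fun n => (((w n)⁻¹ : Bˣ) : B)) atTop (𝓝 (exp (-(u + v)))) := by
      have hneg : -v + -u = -(u + v) := by abel
      refine (hneg ▸ s19_trotter (-v) (-u)).congr fun n => ?_
      have h1 : ((w n)⁻¹ : Bˣ) = ((q n)⁻¹ * (p n)⁻¹) ^ n := by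
        rw [hwdef, ← inv_pow, mul_inv_rev]
      rw [h1]
      push_cast
      rw [s19_inv_val (hp' n), s19_inv_val (hq' n)]
      simp [smul_neg]
    obtain ⟨U, hUG, hUval⟩ := s19_units_limit hG hwG (s19_exp_mul_exp_neg (u + v))
      (s19_exp_neg_mul_exp (u + v)) hval hinv
    exact ⟨U, hUG, by rw [hUval, smul_add]⟩
  -- closed
  have hclosedS : IsClosed S := by
    refine IsSeqClosed.isClosed ?_
    intro f x hf hfx t
    choose p hpG hp using fun n => hf n t
    have hval : Tendsto (fun n => ((p n : Bˣ) : B)) atTop (𝓝 (exp (t • x))) :=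
      ((exp_continuous.tendsto _).comp (hfx.const_smul t)).congr fun n => (hp n).symm
    have hinv : Tendsto (fun n => (((p n)⁻¹ : Bˣ) : B)) atTop (𝓝 (exp (-(t • x)))) :=
      ((exp_continuous.tendsto _).comp ((hfx.const_smul t).neg)).congr fun n =>
        (s19_inv_val (hp n)).symm
    exact s19_units_limit hG hpG (s19_exp_mul_exp_neg (t • x)) (s19_exp_neg_mul_exp (t • x))
      hval hinv
  -- bracket
  have hbracket : ∀ x y : B, x ∈ S → y ∈ S → x * y - y * x ∈ S := by
    intro x y hx hy
    set F : ℝ → B := fun s => exp (s • x) * y * exp (-(s • x)) with hFdef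
    have hmem : ∀ s : ℝ, F s ∈ S := by
      intro s t
      obtain ⟨P, hPG, hP⟩ := hx s
      obtain ⟨Q, hQG, hQ⟩ := hy t
      refine ⟨P * Q * P⁻¹, mul_mem (mul_mem hPG hQG) (inv_mem hPG), ?_⟩
      have h1 : t • F s = (P : B) * (t • y) * ((P⁻¹ : Bˣ) : B) := by
        simp only [hFdef]
        rw [← hP, ← s19_inv_val hP]
        simp only [mul_smul_comm, smul_mul_assoc]
      rw [h1, exp_units_conj P (t • y)]
      simp [Units.val_mul, hQ]
    have hF0 : F 0 = y := by simp [hFdef]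
    have h1 : HasDerivAt (fun s : ℝ => exp (s • x)) x 0 := by
      simpa using hasDerivAt_exp_smul_const (𝕂 := ℝ) x (0:ℝ)
    have h2 : HasDerivAt (fun s : ℝ => exp (-(s • x))) (-x) 0 := by
      have hneg : HasDerivAt (fun s : ℝ => -s) (-1) (0:ℝ) := hasDerivAt_neg' 0
      have hcomp := HasDerivAt.scomp (0:ℝ)
        (by simpa using hasDerivAt_exp_smul_const (𝕂 := ℝ) x (0:ℝ) :
          HasDerivAt (fun s : ℝ => exp (s • x)) x (-(0:ℝ))) hneg
      simp only [neg_smul] at hcomp ⊢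
      convert hcomp using 2
      · rfl
      all_goals simp
    have h3 : HasDerivAt (fun s : ℝ => exp (s • x) * y) (x * y) 0 := h1.mul_const y
    have h4 : HasDerivAt F (x * y - y * x) 0 := by
      have := h3.mul h2
      simp only [zero_smul, neg_zero, exp_zero, one_mul, mul_one] at this
      convert this using 1
      · rfl
      noncomm_ring
    rw [hasDerivAt_iff_tendsto_slope] at h4
    refine hclosedS.mem_of_tendsto h4 (Eventually.of_forall fun s => ?_)
    rw [slope_def_module, hF0, sub_zero]
    have : F s - y = F s + (-1 : ℝ) • y := by rw [neg_one_smul, sub_eq_add_neg]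
    rw [this]
    exact hsmulS s⁻¹ _ (haddS _ _ (hmem s) (hsmulS (-1) y hy))
  exact ⟨hclosedS, hzero, haddS, hsmulS, hbracket⟩
end
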